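/- Let R be a finite chain ring, supp : R^n → ℤ^u a standard support, and M1, M2 submodules of R^n. Then supp(M1+M2) = supp(M1) ∨ supp(M2), and if M1, M2 are rectangular submodules, supp(M1∩M2) = supp(M1) ∧ supp(M2); hence supp restricted to rectangular submodules is a modular function: supp(M1)+supp(M2) = supp(M1+M2)+supp(M1∩M2). -/

import Mathlib

/-- The support of a submodule: the coordinatewise join (supremum) of the supports
of its elements. -/
noncomputable def suppMod {R : Type*} [CommRing R] {n u : ℕ}
    (supp : (Fin n → R) → Fin u → ℤ) (M : Submodule R (Fin n → R)) : Fin u → ℤ :=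
  fun j => sSup ((fun m => supp m j) '' (M : Set (Fin n → R)))

/-- A rectangular submodule of `R^n` is a product of ideals `I1 × ⋯ × In`. -/
def IsRectangular {R : Type*} [CommRing R] {n : ℕ} (M : Submodule R (Fin n → R)) : Prop :=
  ∃ I : Fin n → Ideal R, M = Submodule.pi Set.univ I

/-- In a local principal ideal ring, divisibility is total. -/
lemma chain_dvd_total {R : Type*} [CommRing R] [IsLocalRing R] [IsPrincipalIdealRing R]
    (a b : R) : a ∣ b ∨ b ∣ a := by
  obtain ⟨c, hc⟩ := (IsPrincipalIdealRing.principal (Ideal.span {a, b})).principal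
  have ha : a ∈ Ideal.span ({a, b} : Set R) := Ideal.subset_span (by simp)
  have hb : b ∈ Ideal.span ({a, b} : Set R) := Ideal.subset_span (by simp)
  rw [hc] at ha hb
  obtain ⟨x, hx⟩ := Ideal.mem_span_singleton'.mp ha
  obtain ⟨y, hy⟩ := Ideal.mem_span_singleton'.mp hb
  have hcmem : c ∈ Ideal.span ({a, b} : Set R) := hc ▸ Ideal.mem_span_singleton_self c
  rw [Ideal.mem_span_pair] at hcmem
  obtain ⟨s, t, hst⟩ := hcmem
  by_cases hx' : IsUnit x
  · obtain ⟨u, rfl⟩ := hx'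
    left
    have hcu : c = ↑u⁻¹ * a := (Units.eq_inv_mul_iff_mul_eq u).mpr hx
    exact ⟨↑u⁻¹ * y, by rw [← hy, hcu]; ring⟩
  · by_cases hy' : IsUnit y
    · obtain ⟨u, rfl⟩ := hy'
      right
      have hcu : c = ↑u⁻¹ * b := (Units.eq_inv_mul_iff_mul_eq u).mpr hy
      exact ⟨↑u⁻¹ * x, by rw [← hx, hcu]; ring⟩
    · have hz : s * x + t * y ∈ IsLocalRing.maximalIdeal R :=
        Ideal.add_mem _ (Ideal.mul_mem_left _ s hx') (Ideal.mul_mem_left _ t hy')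
      have hzc : (s * x + t * y) * c = c := by
        calc (s * x + t * y) * c = s * (x * c) + t * (y * c) := by ring
          _ = s * a + t * b := by rw [hx, hy]
          _ = c := hst
      have h0 : (1 - (s * x + t * y)) * c = 0 := by rw [sub_mul, one_mul, hzc, sub_self]
      have hu : IsUnit (1 - (s * x + t * y)) :=
        IsLocalRing.isUnit_one_sub_self_of_mem_nonunits _ hz
      have hc0 : c = 0 := by
        rcases hu with ⟨u, hu⟩
        have := congrArg (fun r => (↑u⁻¹ : R) * r) (hu ▸ h0)
        simpa using this
      left
      rw [← hy, ← hx, hc0]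
      simp

/-- In a local principal ideal ring, ideals are totally ordered. -/
lemma chain_ideal_total {R : Type*} [CommRing R] [IsLocalRing R] [IsPrincipalIdealRing R]
    (I J : Ideal R) : I ≤ J ∨ J ≤ I := by
  obtain ⟨a, rfl⟩ := (IsPrincipalIdealRing.principal I).principal
  obtain ⟨b, rfl⟩ := (IsPrincipalIdealRing.principal J).principal
  rcases chain_dvd_total a b with h | h
  · exact Or.inr (Ideal.span_singleton_le_span_singleton.mpr h)
  · exact Or.inl (Ideal.span_singleton_le_span_singleton.mpr h)

/-- For a finite chain ring `R` and a standard support on `R^n`: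
`supp(M1+M2) = supp M1 ⊔ supp M2`; and for rectangular submodules moreover
`supp(M1∩M2) = supp M1 ⊓ supp M2`, whence `supp` is modular on rectangular
submodules. -/
theorem suppMod_modular
    {R : Type*} [CommRing R] [Fintype R] [IsLocalRing R] [IsPrincipalIdealRing R]
    (n u : ℕ) (supp : (Fin n → R) → Fin u → ℤ)
    (hzero : ∀ v : Fin n → R, supp v = 0 ↔ v = 0)
    (hsmul : ∀ (r : R) (v : Fin n → R), supp (r • v) ≤ supp v)
    (hadd : ∀ v w : Fin n → R, supp (v + w) ≤ supp v ⊔ supp w)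
    (π : Fin u → Fin n)
    (hstd : ∀ (v w : Fin n → R) (j : Fin u), v (π j) = w (π j) → supp v j = supp w j)
    (M1 M2 : Submodule R (Fin n → R)) :
    suppMod supp (M1 ⊔ M2) = suppMod supp M1 ⊔ suppMod supp M2 ∧
    (IsRectangular M1 → IsRectangular M2 →
      suppMod supp (M1 ⊓ M2) = suppMod supp M1 ⊓ suppMod supp M2 ∧
      suppMod supp M1 + suppMod supp M2
        = suppMod supp (M1 ⊔ M2) + suppMod supp (M1 ⊓ M2)) := by
  -- the sup defining `suppMod` is attained and is an upper bound
  have spec : ∀ (M : Submodule R (Fin n → R)) (j : Fin u),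
      (∃ m ∈ M, supp m j = suppMod supp M j) ∧
      ∀ m ∈ M, supp m j ≤ suppMod supp M j := by
    intro M j
    have hsub : (fun m => supp m j) '' (M : Set (Fin n → R)) ⊆
        Set.range (fun r : R => supp (fun _ => r) j) := by
      rintro x ⟨m, hm, rfl⟩
      exact ⟨m (π j), hstd (fun _ => m (π j)) m j rfl⟩
    have hfin : ((fun m => supp m j) '' (M : Set (Fin n → R))).Finite :=
      (Set.finite_range _).subset hsub
    have hne : ((fun m => supp m j) '' (M : Set (Fin n → R))).Nonempty :=
      ⟨supp 0 j, 0, M.zero_mem, rfl⟩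
    refine ⟨?_, fun m hm => le_csSup hfin.bddAbove ⟨m, hm, rfl⟩⟩
    have := hne.csSup_mem hfin
    obtain ⟨m, hm, hmv⟩ := this
    exact ⟨m, hm, hmv⟩
  have mono : ∀ M N : Submodule R (Fin n → R), M ≤ N →
      suppMod supp M ≤ suppMod supp N := by
    intro M N h j
    obtain ⟨m, hm, hv⟩ := (spec M j).1
    rw [← hv]
    exact (spec N j).2 m (h hm)
  have hsup : suppMod supp (M1 ⊔ M2) = suppMod supp M1 ⊔ suppMod supp M2 := by
    apply le_antisymm
    · intro j
      obtain ⟨m, hm, hv⟩ := (spec (M1 ⊔ M2) j).1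
      rw [← hv]
      obtain ⟨m1, hm1, m2, hm2, rfl⟩ := Submodule.mem_sup.mp hm
      calc supp (m1 + m2) j ≤ (supp m1 ⊔ supp m2) j := hadd m1 m2 j
        _ = max (supp m1 j) (supp m2 j) := rfl
        _ ≤ max (suppMod supp M1 j) (suppMod supp M2 j) :=
            max_le_max ((spec M1 j).2 m1 hm1) ((spec M2 j).2 m2 hm2)
        _ = (suppMod supp M1 ⊔ suppMod supp M2) j := rfl
    · exact sup_le (mono _ _ le_sup_left) (mono _ _ le_sup_right)
  refine ⟨hsup, ?_⟩
  rintro ⟨I, rfl⟩ ⟨J, rfl⟩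
  -- the key one-sided claim
  have claim : ∀ (I J : Fin n → Ideal R) (j : Fin u), I (π j) ≤ J (π j) →
      suppMod supp (Submodule.pi Set.univ I ⊓ Submodule.pi Set.univ J) j
        = min (suppMod supp (Submodule.pi Set.univ I) j)
            (suppMod supp (Submodule.pi Set.univ J) j) := by
    intro I J j hIJ
    obtain ⟨m1, hm1, hv1⟩ := (spec (Submodule.pi Set.univ I) j).1
    set m' : Fin n → R := Pi.single (π j) (m1 (π j)) with hm'def
    have hm1pi : ∀ i, m1 i ∈ I i := fun i => (Submodule.mem_pi.mp hm1) i (Set.mem_univ i)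
    have hm'I : m' ∈ Submodule.pi Set.univ I := by
      rw [Submodule.mem_pi]
      intro i _
      by_cases hi : i = π j
      · subst hi; simpa [hm'def] using hm1pi (π j)
      · simp [hm'def, Pi.single_eq_of_ne hi]
    have hm'J : m' ∈ Submodule.pi Set.univ J := by
      rw [Submodule.mem_pi]
      intro i _
      by_cases hi : i = π j
      · subst hi
        simpa [hm'def] using hIJ (hm1pi (π j))
      · simp [hm'def, Pi.single_eq_of_ne hi]
    have hsupp' : supp m' j = supp m1 j := hstd m' m1 j (by simp [hm'def])
    have h1 : suppMod supp (Submodule.pi Set.univ I) j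
        ≤ suppMod supp (Submodule.pi Set.univ I ⊓ Submodule.pi Set.univ J) j := by
      rw [← hv1, ← hsupp']
      exact (spec _ j).2 m' ⟨hm'I, hm'J⟩
    have h2 : suppMod supp (Submodule.pi Set.univ I) j
        ≤ suppMod supp (Submodule.pi Set.univ J) j := by
      rw [← hv1, ← hsupp']
      exact (spec _ j).2 m' hm'J
    have h3 := mono _ _ (inf_le_left (a := Submodule.pi Set.univ I)
      (b := Submodule.pi Set.univ J)) j
    rw [min_eq_left h2]
    exact le_antisymm h3 h1
  have hinf : suppMod supp (Submodule.pi Set.univ I ⊓ Submodule.pi Set.univ J)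
      = suppMod supp (Submodule.pi Set.univ I) ⊓ suppMod supp (Submodule.pi Set.univ J) := by
    funext j
    rcases chain_ideal_total (I (π j)) (J (π j)) with h | h
    · rw [Pi.inf_apply, claim I J j h]
    · rw [Pi.inf_apply, inf_comm (Submodule.pi Set.univ I),
        claim J I j h, min_comm]
  refine ⟨hinf, ?_⟩
  funext j
  rw [hsup, hinf]
  simp only [Pi.add_apply, Pi.sup_apply, Pi.inf_apply]
  omega
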